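/- (Euclidean division lemma, unequal-rank case) Let L₁, L₂ be finitely presented linear orders with ω ×ₗ (L₁ + L₂) ≅ ω ×ₗ (L₂ + L₁). If the Hausdorff rank of L₂ is strictly less than that of L₁, then ω ×ₗ L₂ is isomorphic to a prefix of L₁. -/

import Mathlib

section HausdorffDerivative

variable {M : Type} [LinearOrder M]

/-- `x ∼₁ y` iff the closed interval between `x` and `y` is finite. -/
def sim1 (x y : M) : Prop := (Set.uIcc x y).Finite

theorem sim1_refl (x : M) : sim1 x x := by simp [sim1]

theorem sim1_symm {x y : M} (h : sim1 x y) : sim1 y x := by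
  rwa [sim1, Set.uIcc_comm]

theorem sim1_trans {x y z : M} (h1 : sim1 x y) (h2 : sim1 y z) : sim1 x z :=
  Set.Finite.subset (h1.union h2) (Set.uIcc_subset_uIcc_union_uIcc)

/-- The setoid of `∼₁`-equivalence. -/
def sim1Setoid (M : Type) [LinearOrder M] : Setoid M :=
  ⟨sim1, ⟨sim1_refl, sim1_symm, sim1_trans⟩⟩

/-- The first Hausdorff derivative `M^(1)`: the linear order of `∼₁`-classes. -/
def HDeriv (M : Type) [LinearOrder M] : Type := Quotient (sim1Setoid M)

theorem sim1_le_congr {x x' y y' : M} (hx : sim1 x x') (hy : sim1 y y')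
    (h : x ≤ y ∨ sim1 x y) : x' ≤ y' ∨ sim1 x' y' := by
  by_cases hxy' : sim1 x' y'
  · exact Or.inr hxy'
  rcases h with h | h
  · left
    by_contra hlt
    push_neg at hlt
    apply hxy' (sim1_symm _)
    have hsub : Set.uIcc y' x' ⊆ Set.uIcc y' y ∪ Set.uIcc x x' := by
      intro z hz
      rw [Set.uIcc_of_le hlt.le, Set.mem_Icc] at hz
      rcases le_or_gt z y with hzy | hzy
      · exact Or.inl (Set.mem_uIcc.2 (Or.inl ⟨hz.1, hzy⟩))
      · exact Or.inr (Set.mem_uIcc.2 (Or.inl ⟨(h.trans hzy.le), hz.2⟩))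
    exact Set.Finite.subset ((sim1_symm hy).union hx) hsub
  · exact absurd (sim1_trans (sim1_trans (sim1_symm hx) h) hy) hxy'

/-- The induced order on `∼₁`-classes. -/
def HDeriv.le : HDeriv M → HDeriv M → Prop :=
  Quotient.lift₂ (fun x y => x ≤ y ∨ sim1 x y)
    (fun _ _ _ _ ha hb => propext
      ⟨sim1_le_congr ha hb, sim1_le_congr (sim1_symm ha) (sim1_symm hb)⟩)

noncomputable instance HDeriv.instLinearOrder : LinearOrder (HDeriv M) where
  le := HDeriv.le
  le_refl := by rintro ⟨x⟩; exact Or.inl le_rfl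
  le_trans := by
    rintro ⟨x⟩ ⟨y⟩ ⟨z⟩ (h1 | h1) (h2 | h2)
    · exact Or.inl (h1.trans h2)
    · rcases le_or_gt x z with h | h
      · exact Or.inl h
      · exact Or.inr (sim1_symm (Set.Finite.subset h2
          (by rw [Set.uIcc_of_le h.le, Set.uIcc_of_ge (h.le.trans h1)]
              exact Set.Icc_subset_Icc le_rfl h1)))
    · rcases le_or_gt x z with h | h
      · exact Or.inl h
      · exact Or.inr (Set.Finite.subset h1
          (by rw [Set.uIcc_of_ge h.le, Set.uIcc_of_ge (h2.trans h.le)]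
              exact Set.Icc_subset_Icc h2 le_rfl))
    · exact Or.inr (sim1_trans h1 h2)
  le_antisymm := by
    rintro ⟨x⟩ ⟨y⟩ (h1 | h1) (h2 | h2)
    · exact Quotient.sound (le_antisymm h1 h2 ▸ sim1_refl x)
    · exact Quotient.sound (sim1_symm h2)
    · exact Quotient.sound h1
    · exact Quotient.sound h1
  le_total := by
    rintro ⟨x⟩ ⟨y⟩
    rcases le_total x y with h | h
    · exact Or.inl (Or.inl h)
    · exact Or.inr (Or.inl h)
  toDecidableLE := Classical.decRel _

end HausdorffDerivative
section IterDeriv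

/-- Auxiliary: the `n`-th iterated Hausdorff derivative together with its order. -/
noncomputable def IterDerivAux (M : Type) (i : LinearOrder M) : ℕ → (T : Type) × LinearOrder T
  | 0 => ⟨M, i⟩
  | n + 1 => ⟨@HDeriv (IterDerivAux M i n).1 (IterDerivAux M i n).2,
      @HDeriv.instLinearOrder (IterDerivAux M i n).1 (IterDerivAux M i n).2⟩

/-- The `n`-th iterated Hausdorff derivative `M^(n)`. -/
noncomputable def IterDeriv (M : Type) [i : LinearOrder M] (n : ℕ) : Type :=
  (IterDerivAux M i n).1

noncomputable instance (M : Type) [i : LinearOrder M] (n : ℕ) : LinearOrder (IterDeriv M n) :=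
  (IterDerivAux M i n).2

/-- The (finite) Hausdorff rank: the least `n` such that `M^(n)` is finite. -/
noncomputable def hrank (M : Type) [LinearOrder M] : ℕ :=
  sInf {n : ℕ | Finite (IterDeriv M n)}

end IterDeriv

/-- The class of finitely presented linear orders: the smallest
isomorphism-closed class containing `0` and `1` and closed under binary ordered
sums and the operations `L ↦ ω ×ₗ L` and `L ↦ ω* ×ₗ L`
(here `ℕ ×ₗ A = ∑_{n∈ω} A` and `ℕᵒᵈ ×ₗ A = ∑_{n∈ω*} A`). -/
inductive IsFP : (L : Type) → [_inst : LinearOrder L] → Prop where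
  | zero : IsFP (Fin 0)
  | one : IsFP (Fin 1)
  | iso {A B : Type} [LinearOrder A] [LinearOrder B] :
      IsFP A → Nonempty (A ≃o B) → IsFP B
  | sum {A B : Type} [LinearOrder A] [LinearOrder B] :
      IsFP A → IsFP B → IsFP (A ⊕ₗ B)
  | omega {A : Type} [LinearOrder A] : IsFP A → IsFP (ℕ ×ₗ A)
  | omegaStar {A : Type} [LinearOrder A] : IsFP A → IsFP (ℕᵒᵈ ×ₗ A)


section API
variable {M : Type} [LinearOrder M]

/-- class of an element -/
def HD (x : M) : HDeriv M := Quotient.mk (sim1Setoid M) x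

theorem HD_surjective : Function.Surjective (HD (M := M)) :=
  fun q => Quotient.exists_rep q

theorem HD_le_iff {x y : M} : HD x ≤ HD y ↔ (x ≤ y ∨ sim1 x y) := Iff.rfl

theorem HD_eq_iff {x y : M} : HD x = HD y ↔ sim1 x y :=
  ⟨fun h => Quotient.exact h, fun h => Quotient.sound h⟩

theorem HD_mono {x y : M} (h : x ≤ y) : HD x ≤ HD y := Or.inl h

theorem HD_lt_iff {x y : M} : HD x < HD y ↔ (x < y ∧ ¬ sim1 x y) := by
  rw [lt_iff_le_not_ge]
  constructor
  · rintro ⟨h1, h2⟩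
    rw [HD_le_iff] at h1 h2
    push_neg at h2
    rcases h1 with h | h
    · exact ⟨lt_of_le_of_ne h (by rintro rfl; exact lt_irrefl _ h2.1), fun hs => h2.2 (sim1_symm hs)⟩
    · exact absurd (sim1_symm h) h2.2
  · rintro ⟨h1, h2⟩
    refine ⟨Or.inl h1.le, ?_⟩
    rw [HD_le_iff]
    rintro (h | h)
    · exact absurd (le_antisymm h1.le h) h1.ne
    · exact h2 (sim1_symm h)

theorem lt_of_HD_lt {x y : M} (h : HD x < HD y) : x < y := (HD_lt_iff.1 h).1
end API

section Congr
variable {A B : Type} [LinearOrder A] [LinearOrder B]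

theorem sim1_map (e : A ≃o B) {x y : A} (h : sim1 x y) : sim1 (e x) (e y) := by
  have : Set.uIcc (e x) (e y) = e '' Set.uIcc x y := by
    ext z
    constructor
    · intro hz
      exact ⟨e.symm z, by
        rcases le_total x y with hxy | hxy
        · rw [Set.uIcc_of_le hxy]
          rw [Set.uIcc_of_le (e.monotone hxy), Set.mem_Icc] at hz
          exact ⟨by rw [← e.symm_apply_apply x]; exact e.symm.monotone hz.1,
                 by rw [← e.symm_apply_apply y]; exact e.symm.monotone hz.2⟩
        · rw [Set.uIcc_of_ge hxy]
          rw [Set.uIcc_of_ge (e.monotone hxy), Set.mem_Icc] at hz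
          exact ⟨by rw [← e.symm_apply_apply y]; exact e.symm.monotone hz.1,
                 by rw [← e.symm_apply_apply x]; exact e.symm.monotone hz.2⟩,
        e.apply_symm_apply z⟩
    · rintro ⟨w, hw, rfl⟩
      rcases le_total x y with hxy | hxy
      · rw [Set.uIcc_of_le hxy, Set.mem_Icc] at hw
        rw [Set.uIcc_of_le (e.monotone hxy), Set.mem_Icc]
        exact ⟨e.monotone hw.1, e.monotone hw.2⟩
      · rw [Set.uIcc_of_ge hxy, Set.mem_Icc] at hw
        rw [Set.uIcc_of_ge (e.monotone hxy), Set.mem_Icc]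
        exact ⟨e.monotone hw.1, e.monotone hw.2⟩
  unfold sim1
  rw [this]
  exact h.image e

/-- The Hausdorff derivative of an order isomorphism. -/
noncomputable def HDeriv.congr (e : A ≃o B) : HDeriv A ≃o HDeriv B where
  toFun := Quotient.map e (fun x y h => sim1_map e h)
  invFun := Quotient.map e.symm (fun x y h => sim1_map e.symm h)
  left_inv := by rintro ⟨x⟩; exact congrArg HD (e.symm_apply_apply x)
  right_inv := by rintro ⟨x⟩; exact congrArg HD (e.apply_symm_apply x)
  map_rel_iff' := by
    rintro ⟨x⟩ ⟨y⟩
    show (HD (e x) ≤ HD (e y)) ↔ (HD x ≤ HD y)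
    rw [HD_le_iff, HD_le_iff, e.le_iff_le]
    constructor
    · rintro (h | h)
      · exact Or.inl h
      · exact Or.inr (by simpa using sim1_map e.symm h)
    · rintro (h | h)
      · exact Or.inl h
      · exact Or.inr (sim1_map e h)

end Congr

section IterAPI
variable {A B : Type} [LinearOrder A] [LinearOrder B]

noncomputable def IterDeriv.congr (e : A ≃o B) : ∀ n, IterDeriv A n ≃o IterDeriv B n
  | 0 => e
  | n+1 => show HDeriv (IterDeriv A n) ≃o HDeriv (IterDeriv B n) from
      HDeriv.congr (IterDeriv.congr e n)

noncomputable def IterDeriv.shift (M : Type) [LinearOrder M] :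
    ∀ n, IterDeriv (HDeriv M) n ≃o IterDeriv M (n+1)
  | 0 => OrderIso.refl _
  | n+1 => show HDeriv (IterDeriv (HDeriv M) n) ≃o HDeriv (IterDeriv M (n+1)) from
      HDeriv.congr (IterDeriv.shift M n)

theorem finite_iterDeriv_congr (e : A ≃o B) {n : ℕ} (h : Finite (IterDeriv A n)) :
    Finite (IterDeriv B n) :=
  Finite.of_equiv _ (IterDeriv.congr e n).toEquiv

theorem finite_iterDeriv_succ {M : Type} [LinearOrder M] {n : ℕ}
    (h : Finite (IterDeriv M n)) : Finite (IterDeriv M (n + 1)) := by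
  have : Finite (HDeriv (IterDeriv M n)) := Finite.of_surjective HD HD_surjective
  exact this

theorem finite_iterDeriv_mono {M : Type} [LinearOrder M] {m n : ℕ} (hmn : m ≤ n)
    (h : Finite (IterDeriv M m)) : Finite (IterDeriv M n) := by
  induction n with
  | zero => simpa [Nat.le_zero.1 hmn] using h
  | succ k ih =>
    rcases Nat.lt_or_ge m (k+1) with h' | h'
    · exact finite_iterDeriv_succ (ih (Nat.lt_succ_iff.1 h'))
    · have : m = k + 1 := le_antisymm hmn h'
      subst this; exact h

theorem finite_iterDeriv_hrank {M : Type} [LinearOrder M]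
    (h : ∃ n, Finite (IterDeriv M n)) : Finite (IterDeriv M (hrank M)) :=
  Nat.sInf_mem (s := {n : ℕ | Finite (IterDeriv M n)}) h

theorem hrank_le {M : Type} [LinearOrder M] {n : ℕ} (h : Finite (IterDeriv M n)) :
    hrank M ≤ n := Nat.sInf_le h
end IterAPI

section Convex
variable {M : Type} [LinearOrder M]

theorem uIcc_coe_eq {S : Set M} (hS : S.OrdConnected) (x y : ↥S) :
    Set.uIcc (x : M) (y : M) = (↑) '' (Set.uIcc x y : Set ↥S) := by
  ext z
  constructor
  · intro hz
    have hzS : z ∈ S := hS.uIcc_subset x.2 y.2 hz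
    refine ⟨⟨z, hzS⟩, ?_, rfl⟩
    rw [Set.mem_uIcc] at hz ⊢
    rcases hz with ⟨h1, h2⟩ | ⟨h1, h2⟩
    · exact Or.inl ⟨h1, h2⟩
    · exact Or.inr ⟨h1, h2⟩
  · rintro ⟨w, hw, rfl⟩
    rw [Set.mem_uIcc] at hw ⊢
    rcases hw with ⟨h1, h2⟩ | ⟨h1, h2⟩
    · exact Or.inl ⟨h1, h2⟩
    · exact Or.inr ⟨h1, h2⟩

theorem sim1_coe_iff {S : Set M} (hS : S.OrdConnected) {x y : ↥S} :
    sim1 x y ↔ sim1 (x : M) (y : M) := by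
  unfold sim1
  rw [uIcc_coe_eq hS]
  exact ⟨fun h => h.image _, fun h => h.of_finite_image Subtype.coe_injective.injOn⟩

theorem uIcc_HD_subset (x y : M) : Set.uIcc (HD x) (HD y) ⊆ HD '' Set.uIcc x y := by
  intro c hc
  obtain ⟨z, rfl⟩ := HD_surjective c
  rw [Set.mem_uIcc] at hc
  rcases hc with ⟨h1, h2⟩ | ⟨h1, h2⟩
  · rcases h1 with h1 | h1
    · rcases h2 with h2 | h2
      · exact ⟨z, Set.mem_uIcc.2 (Or.inl ⟨h1, h2⟩), rfl⟩
      · exact ⟨y, Set.right_mem_uIcc, (HD_eq_iff.2 (sim1_symm h2))⟩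
    · exact ⟨x, Set.left_mem_uIcc, (HD_eq_iff.2 h1)⟩
  · rcases h1 with h1 | h1
    · rcases h2 with h2 | h2
      · exact ⟨z, Set.mem_uIcc.2 (Or.inr ⟨h1, h2⟩), rfl⟩
      · exact ⟨x, Set.left_mem_uIcc, (HD_eq_iff.2 (sim1_symm h2))⟩
    · exact ⟨y, Set.right_mem_uIcc, (HD_eq_iff.2 h1)⟩

theorem ordConnected_HD_image {S : Set M} (hS : S.OrdConnected) :
    (HD '' S).OrdConnected := by
  constructor
  rintro c ⟨x, hx, rfl⟩ d ⟨y, hy, rfl⟩ z hz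
  have := uIcc_HD_subset x y (Set.Icc_subset_uIcc hz)
  obtain ⟨w, hw, rfl⟩ := this
  exact ⟨w, hS.uIcc_subset hx hy hw, rfl⟩

end Convex

section SubIso
variable {M : Type} [LinearOrder M]

theorem finite_of_orderIso {A B : Type} [LinearOrder A] [LinearOrder B] (e : A ≃o B)
    (h : Finite A) : Finite B := Finite.of_equiv _ e.toEquiv

noncomputable def HDeriv.subIso {S : Set M} (hS : S.OrdConnected) :
    HDeriv ↥S ≃o ↥(HD '' S) := by
  have fdef : ∀ x y : ↥S, sim1 x y → (⟨HD (x:M), ⟨x, x.2, rfl⟩⟩ : ↥(HD '' S)) = ⟨HD (y:M), ⟨y, y.2, rfl⟩⟩ := by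
    intro x y h
    exact Subtype.ext (HD_eq_iff.2 ((sim1_coe_iff hS).1 h))
  let f : HDeriv ↥S → ↥(HD '' S) :=
    Quotient.lift (fun x : ↥S => (⟨HD (x:M), ⟨x, x.2, rfl⟩⟩ : ↥(HD '' S))) fdef
  have hle : ∀ a b : HDeriv ↥S, f a ≤ f b ↔ a ≤ b := by
    rintro ⟨x⟩ ⟨y⟩
    show HD (x:M) ≤ HD (y:M) ↔ HD x ≤ HD y
    rw [HD_le_iff, HD_le_iff, sim1_coe_iff hS, Subtype.coe_le_coe]
  have hsm : StrictMono f := by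
    intro a b hab
    rw [lt_iff_le_not_ge] at hab ⊢
    rw [hle, hle]
    exact hab
  have hsurj : Function.Surjective f := by
    rintro ⟨c, x, hx, rfl⟩
    exact ⟨HD (⟨x, hx⟩ : ↥S), rfl⟩
  exact hsm.orderIsoOfSurjective f hsurj

theorem finite_iterDeriv_subtype : ∀ (n : ℕ) (M : Type) [LinearOrder M] (S : Set M),
    S.OrdConnected → Finite (IterDeriv M n) → Finite (IterDeriv ↥S n) := by
  intro n
  induction n with
  | zero =>
    intro M _ S _ h
    have : Finite M := h
    exact Subtype.finite (α := M)
  | succ n ih =>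
    intro M _ S hS h
    have h1 : Finite (IterDeriv (HDeriv M) n) :=
      finite_of_orderIso (IterDeriv.shift M n).symm h
    have h2 : Finite (IterDeriv ↥(HD '' S) n) :=
      ih (HDeriv M) (HD '' S) (ordConnected_HD_image hS) h1
    have h3 : Finite (IterDeriv (HDeriv ↥S) n) :=
      finite_iterDeriv_congr (HDeriv.subIso hS).symm h2
    exact finite_of_orderIso (IterDeriv.shift ↥S n) h3

theorem finite_iterDeriv_union : ∀ (n : ℕ) (M : Type) [LinearOrder M] (S T : Set M),
    S.OrdConnected → T.OrdConnected → S ∪ T = Set.univ →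
    Finite (IterDeriv ↥S n) → Finite (IterDeriv ↥T n) → Finite (IterDeriv M n) := by
  intro n
  induction n with
  | zero =>
    intro M _ S T _ _ hcov hS hT
    have : (Set.univ : Set M).Finite := by
      rw [← hcov]
      exact (Set.finite_coe_iff.1 hS).union (Set.finite_coe_iff.1 hT)
    exact Set.finite_univ_iff.1 this
  | succ n ih =>
    intro M _ S T hSc hTc hcov hS hT
    have hS' : Finite (IterDeriv ↥(HD '' S) n) :=
      finite_iterDeriv_congr (HDeriv.subIso hSc)
        (finite_of_orderIso (IterDeriv.shift ↥S n).symm hS)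
    have hT' : Finite (IterDeriv ↥(HD '' T) n) :=
      finite_iterDeriv_congr (HDeriv.subIso hTc)
        (finite_of_orderIso (IterDeriv.shift ↥T n).symm hT)
    have hcov' : HD '' S ∪ HD '' T = Set.univ := by
      rw [← Set.image_union, hcov]
      exact Set.eq_univ_of_forall (fun c => by
        obtain ⟨x, rfl⟩ := HD_surjective c
        exact ⟨x, Set.mem_univ x, rfl⟩)
    have := ih (HDeriv M) (HD '' S) (HD '' T) (ordConnected_HD_image hSc)
      (ordConnected_HD_image hTc) hcov' hS' hT'
    exact finite_of_orderIso (IterDeriv.shift M n) this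
end SubIso

section SeqLemma

theorem finite_iterDeriv_seq : ∀ (n : ℕ) (M : Type) [LinearOrder M] (S : ℕ → Set M),
    (∀ k, (S k).OrdConnected) → (∀ x : M, ∃ k, x ∈ S k) →
    (∀ x y : M, ∃ F : Finset ℕ, Set.uIcc x y ⊆ ⋃ j ∈ F, S j) →
    (∀ k, Finite (IterDeriv ↥(S k) n)) → Finite (IterDeriv M (n + 1)) := by
  intro n
  induction n with
  | zero =>
    intro M _ S hconn hcov hloc hfin
    have hsub : Subsingleton (HDeriv M) := by
      constructor
      rintro ⟨x⟩ ⟨y⟩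
      apply HD_eq_iff.2
      obtain ⟨F, hF⟩ := hloc x y
      have : (⋃ j ∈ F, S j).Finite :=
        Set.Finite.biUnion F.finite_toSet (fun j _ => Set.finite_coe_iff.1 (hfin j))
      exact this.subset hF
    have : Finite (HDeriv M) := @Finite.of_subsingleton _ hsub
    exact this
  | succ n ih =>
    intro M _ S hconn hcov hloc hfin
    have key : Finite (IterDeriv (HDeriv M) (n + 1)) := by
      apply ih (HDeriv M) (fun k => HD '' S k)
      · exact fun k => ordConnected_HD_image (hconn k)
      · rintro c
        obtain ⟨x, rfl⟩ := HD_surjective c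
        obtain ⟨k, hk⟩ := hcov x
        exact ⟨k, x, hk, rfl⟩
      · rintro c d
        obtain ⟨x, rfl⟩ := HD_surjective c
        obtain ⟨y, rfl⟩ := HD_surjective d
        obtain ⟨F, hF⟩ := hloc x y
        refine ⟨F, fun e he => ?_⟩
        obtain ⟨z, hz, rfl⟩ := uIcc_HD_subset x y he
        obtain ⟨j, hjF, hj⟩ := Set.mem_iUnion₂.1 (hF hz)
        exact Set.mem_iUnion₂.2 ⟨j, hjF, z, hj, rfl⟩
      · intro k
        exact finite_iterDeriv_congr (HDeriv.subIso (hconn k))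
          (finite_of_orderIso (IterDeriv.shift ↥(S k) n).symm (hfin k))
    exact finite_of_orderIso (IterDeriv.shift M (n + 1)) key

end SeqLemma

section Blocks
variable {A B : Type} [LinearOrder A] [LinearOrder B]

def inlSet (A B : Type) [LinearOrder A] [LinearOrder B] : Set (A ⊕ₗ B) :=
  Set.range (fun a : A => (toLex (Sum.inl a) : A ⊕ₗ B))

def inrSet (A B : Type) [LinearOrder A] [LinearOrder B] : Set (A ⊕ₗ B) :=
  Set.range (fun b : B => (toLex (Sum.inr b) : A ⊕ₗ B))

theorem ordConnected_inlSet : (inlSet A B).OrdConnected := by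
  constructor
  rintro x ⟨a, rfl⟩ y ⟨b, rfl⟩ z hz
  rcases h : ofLex z with c | c
  · exact ⟨c, (congrArg toLex h).symm⟩
  · exfalso
    have hzy : z ≤ toLex (Sum.inl b) := hz.2
    have : z = toLex (Sum.inr c) := congrArg toLex h
    rw [this] at hzy
    exact Sum.Lex.not_inr_le_inl hzy

theorem ordConnected_inrSet : (inrSet A B).OrdConnected := by
  constructor
  rintro x ⟨a, rfl⟩ y ⟨b, rfl⟩ z hz
  rcases h : ofLex z with c | c
  · exfalso
    have hxz : toLex (Sum.inr a) ≤ z := hz.1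
    have : z = toLex (Sum.inl c) := congrArg toLex h
    rw [this] at hxz
    exact Sum.Lex.not_inr_le_inl hxz
  · exact ⟨c, (congrArg toLex h).symm⟩

theorem inlSet_union_inrSet : inlSet A B ∪ inrSet A B = Set.univ := by
  apply Set.eq_univ_of_forall
  intro z
  rcases h : ofLex z with c | c
  · exact Or.inl ⟨c, (congrArg toLex h).symm⟩
  · exact Or.inr ⟨c, (congrArg toLex h).symm⟩

noncomputable def inlIso : A ≃o ↥(inlSet A B) := by
  have hsm : StrictMono (fun a : A => (⟨toLex (Sum.inl a), a, rfl⟩ : ↥(inlSet A B))) := by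
    intro a b hab
    exact Subtype.mk_lt_mk.2 (Sum.Lex.inl_lt_inl_iff.2 hab)
  refine hsm.orderIsoOfSurjective _ ?_
  rintro ⟨_, a, rfl⟩
  exact ⟨a, rfl⟩

noncomputable def inrIso : B ≃o ↥(inrSet A B) := by
  have hsm : StrictMono (fun b : B => (⟨toLex (Sum.inr b), b, rfl⟩ : ↥(inrSet A B))) := by
    intro a b hab
    exact Subtype.mk_lt_mk.2 (Sum.Lex.inr_lt_inr_iff.2 hab)
  refine hsm.orderIsoOfSurjective _ ?_
  rintro ⟨_, b, rfl⟩
  exact ⟨b, rfl⟩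

def fiberSet (α : Type) [LinearOrder α] (B : Type) [LinearOrder B] (k : α) :
    Set (α ×ₗ B) := {p | (ofLex p).1 = k}

theorem ordConnected_fiberSet (α : Type) [LinearOrder α] (k : α) :
    (fiberSet α B k).OrdConnected := by
  constructor
  rintro x hx y hy z hz
  have h1 : x ≤ z := hz.1
  have h2 : z ≤ y := hz.2
  have e1 : (ofLex x).1 < (ofLex z).1 ∨ (ofLex x).1 = (ofLex z).1 ∧ (ofLex x).2 ≤ (ofLex z).2 :=
    (Prod.Lex.toLex_le_toLex (x := (ofLex x)) (y := (ofLex z))).1 h1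
  have e2 : (ofLex z).1 < (ofLex y).1 ∨ (ofLex z).1 = (ofLex y).1 ∧ (ofLex z).2 ≤ (ofLex y).2 :=
    (Prod.Lex.toLex_le_toLex (x := (ofLex z)) (y := (ofLex y))).1 h2
  have hxk : (ofLex x).1 = k := hx
  have hyk : (ofLex y).1 = k := hy
  show (ofLex z).1 = k
  rcases e1 with e1 | e1
  · rcases e2 with e2 | e2
    · exact absurd (e1.trans e2) (by rw [hxk, hyk]; exact lt_irrefl k)
    · exact e2.1.trans hyk
  · exact e1.1.symm.trans hxk

noncomputable def fiberIso (α : Type) [LinearOrder α] (k : α) :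
    B ≃o ↥(fiberSet α B k) := by
  have hsm : StrictMono (fun b : B => (⟨toLex (k, b), rfl⟩ : ↥(fiberSet α B k))) := by
    intro a b hab
    apply Subtype.mk_lt_mk.2
    exact (Prod.Lex.toLex_lt_toLex (x := (k, a)) (y := (k, b))).2 (Or.inr ⟨rfl, hab⟩)
  refine hsm.orderIsoOfSurjective _ ?_
  rintro ⟨p, hp⟩
  refine ⟨(ofLex p).2, ?_⟩
  apply Subtype.ext
  show toLex (k, (ofLex p).2) = p
  have : (ofLex p).1 = k := hp
  rw [← this]
  rfl

end Blocks

theorem isFP_finite_rank {L : Type} [LinearOrder L] (h : IsFP L) :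
    ∃ n, Finite (IterDeriv L n) := by
  induction h with
  | zero => exact ⟨0, show Finite (Fin 0) from inferInstance⟩
  | one => exact ⟨0, show Finite (Fin 1) from inferInstance⟩
  | @iso A B _ _ _ hne ih =>
    obtain ⟨e⟩ := hne
    obtain ⟨n, hn⟩ := ih
    exact ⟨n, finite_iterDeriv_congr e hn⟩
  | @sum A B _ _ _ _ ihA ihB =>
    obtain ⟨n, hn⟩ := ihA
    obtain ⟨m, hm⟩ := ihB
    set N := max n m with hN
    have hn' : Finite (IterDeriv A N) := finite_iterDeriv_mono (le_max_left n m) hn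
    have hm' : Finite (IterDeriv B N) := finite_iterDeriv_mono (le_max_right n m) hm
    refine ⟨N, finite_iterDeriv_union N _ (inlSet A B) (inrSet A B)
      ordConnected_inlSet ordConnected_inrSet inlSet_union_inrSet
      (finite_iterDeriv_congr inlIso hn') (finite_iterDeriv_congr inrIso hm')⟩
  | @omega A _ _ ih =>
    obtain ⟨n, hn⟩ := ih
    refine ⟨n + 1, finite_iterDeriv_seq n _ (fiberSet ℕ A) (fun k => ordConnected_fiberSet ℕ k)
      (fun p => ⟨(ofLex p).1, rfl⟩) ?_ (fun k => finite_iterDeriv_congr (fiberIso ℕ k) hn)⟩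
    intro x y
    refine ⟨Finset.range (max (ofLex x).1 (ofLex y).1 + 1), fun z hz => ?_⟩
    have hz1 : (ofLex z).1 ≤ max (ofLex x).1 (ofLex y).1 := by
      rw [Set.mem_uIcc] at hz
      rcases hz with ⟨_, h2⟩ | ⟨_, h2⟩
      · rcases (Prod.Lex.toLex_le_toLex (x := (ofLex z)) (y := (ofLex y))).1 h2 with h | h
        · exact le_max_of_le_right h.le
        · exact le_max_of_le_right h.1.le
      · rcases (Prod.Lex.toLex_le_toLex (x := (ofLex z)) (y := (ofLex x))).1 h2 with h | h
        · exact le_max_of_le_left h.le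
        · exact le_max_of_le_left h.1.le
    exact Set.mem_iUnion₂.2 ⟨(ofLex z).1, Finset.mem_range.2 (Nat.lt_succ_of_le hz1), rfl⟩
  | @omegaStar A _ _ ih =>
    obtain ⟨n, hn⟩ := ih
    refine ⟨n + 1, finite_iterDeriv_seq n _
      (fun k => fiberSet ℕᵒᵈ A (OrderDual.toDual k))
      (fun k => ordConnected_fiberSet ℕᵒᵈ _)
      (fun p => ⟨OrderDual.ofDual (ofLex p).1, rfl⟩) ?_
      (fun k => finite_iterDeriv_congr (fiberIso ℕᵒᵈ _) hn)⟩
    intro x y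
    refine ⟨Finset.range (max (OrderDual.ofDual (ofLex x).1) (OrderDual.ofDual (ofLex y).1) + 1),
      fun z hz => ?_⟩
    have hz1 : OrderDual.ofDual (ofLex z).1 ≤
        max (OrderDual.ofDual (ofLex x).1) (OrderDual.ofDual (ofLex y).1) := by
      rw [Set.mem_uIcc] at hz
      rcases hz with ⟨h1, _⟩ | ⟨h1, _⟩
      · rcases (Prod.Lex.toLex_le_toLex (x := (ofLex x)) (y := (ofLex z))).1 h1 with h | h
        · exact le_max_of_le_left h.le
        · exact le_max_of_le_left (congrArg OrderDual.ofDual h.1).ge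
      · rcases (Prod.Lex.toLex_le_toLex (x := (ofLex y)) (y := (ofLex z))).1 h1 with h | h
        · exact le_max_of_le_right h.le
        · exact le_max_of_le_right (congrArg OrderDual.ofDual h.1).ge
    exact Set.mem_iUnion₂.2 ⟨OrderDual.ofDual (ofLex z).1,
      Finset.mem_range.2 (Nat.lt_succ_of_le hz1), rfl⟩

section OrderConstructions
variable {A B C D : Type} [LinearOrder A] [LinearOrder B] [LinearOrder C] [LinearOrder D]

/-- Sum congruence for lexicographic sums. -/
noncomputable def sumLexIso (e₁ : A ≃o C) (e₂ : B ≃o D) : (A ⊕ₗ B) ≃o (C ⊕ₗ D) := by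
  have hsm : StrictMono (fun x : A ⊕ₗ B =>
      (Sum.elim (fun a => toLex (Sum.inl (e₁ a))) (fun b => toLex (Sum.inr (e₂ b)))
        (ofLex x) : C ⊕ₗ D)) := by
    intro x y hxy
    rcases hx : ofLex x with a | b <;> rcases hy : ofLex y with a' | b' <;>
      rw [show x = toLex (ofLex x) from rfl, show y = toLex (ofLex y) from rfl, hx, hy] at hxy <;>
      simp only [hx, hy, Sum.elim_inl, Sum.elim_inr]
    · exact Sum.Lex.inl_lt_inl_iff.2 (e₁.strictMono (Sum.Lex.inl_lt_inl_iff.1 hxy))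
    · exact Sum.Lex.inl_lt_inr _ _
    · exact absurd hxy Sum.Lex.not_inr_lt_inl
    · exact Sum.Lex.inr_lt_inr_iff.2 (e₂.strictMono (Sum.Lex.inr_lt_inr_iff.1 hxy))
  refine hsm.orderIsoOfSurjective _ ?_
  intro z
  rcases hz : ofLex z with c | d
  · exact ⟨toLex (Sum.inl (e₁.symm c)), by simp [(congrArg toLex hz).symm]⟩
  · exact ⟨toLex (Sum.inr (e₂.symm d)), by simp [(congrArg toLex hz).symm]⟩

end OrderConstructions

section Rot
variable {A B : Type} [LinearOrder A] [LinearOrder B]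

noncomputable def rotFun (p : ℕ ×ₗ (A ⊕ₗ B)) : A ⊕ₗ (ℕ ×ₗ (B ⊕ₗ A)) :=
  match ofLex (ofLex p).2 with
  | Sum.inr b => toLex (Sum.inr (toLex ((ofLex p).1, toLex (Sum.inl b))))
  | Sum.inl a =>
    match (ofLex p).1 with
    | 0 => toLex (Sum.inl a)
    | n+1 => toLex (Sum.inr (toLex (n, toLex (Sum.inr a))))

theorem rotFun_zero_inl (a : A) :
    rotFun (toLex ((0:ℕ), toLex (Sum.inl a)) : ℕ ×ₗ (A ⊕ₗ B)) = toLex (Sum.inl a) := rfl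

theorem rotFun_succ_inl (n : ℕ) (a : A) :
    rotFun (toLex (n+1, toLex (Sum.inl a)) : ℕ ×ₗ (A ⊕ₗ B)) =
      toLex (Sum.inr (toLex (n, toLex (Sum.inr a)))) := rfl

theorem rotFun_inr (n : ℕ) (b : B) :
    rotFun (toLex (n, toLex (Sum.inr b)) : ℕ ×ₗ (A ⊕ₗ B)) =
      toLex (Sum.inr (toLex (n, toLex (Sum.inl b)))) := rfl

theorem rotFun_strictMono : StrictMono (rotFun (A := A) (B := B)) := by
  suffices h : ∀ (m n : ℕ) (u v : A ⊕ B),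
      (toLex (m, toLex u) : ℕ ×ₗ (A ⊕ₗ B)) < toLex (n, toLex v) →
      rotFun (toLex (m, toLex u)) < rotFun (toLex (n, toLex v)) by
    intro p q hpq
    exact h (ofLex p).1 (ofLex q).1 (ofLex (ofLex p).2) (ofLex (ofLex q).2) hpq
  intro m n u v h
  have h' : m < n ∨ m = n ∧ (toLex u : A ⊕ₗ B) < toLex v :=
    (Prod.Lex.toLex_lt_toLex (x := (m, toLex u)) (y := (n, toLex v))).1 h
  rcases u with a | b <;> rcases v with a' | b'
  · rcases m with _ | j <;> rcases n with _ | k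
    · rw [rotFun_zero_inl, rotFun_zero_inl]
      rcases h' with h' | ⟨_, h'⟩
      · omega
      · exact Sum.Lex.inl_lt_inl_iff.2 (Sum.Lex.inl_lt_inl_iff.1 h')
    · rw [rotFun_zero_inl, rotFun_succ_inl]
      exact Sum.Lex.inl_lt_inr _ _
    · rcases h' with h' | ⟨h', _⟩ <;> omega
    · rw [rotFun_succ_inl, rotFun_succ_inl]
      apply Sum.Lex.inr_lt_inr_iff.2
      apply (Prod.Lex.toLex_lt_toLex).2
      rcases h' with h' | ⟨h', h''⟩
      · exact Or.inl (by omega)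
      · exact Or.inr ⟨by omega, Sum.Lex.inr_lt_inr_iff.2 (Sum.Lex.inl_lt_inl_iff.1 h'')⟩
  · rcases m with _ | j
    · rw [rotFun_zero_inl, rotFun_inr]
      exact Sum.Lex.inl_lt_inr _ _
    · rw [rotFun_succ_inl, rotFun_inr]
      apply Sum.Lex.inr_lt_inr_iff.2
      apply (Prod.Lex.toLex_lt_toLex).2
      refine Or.inl ?_
      rcases h' with h' | ⟨h', h''⟩ <;> omega
  · rcases n with _ | k
    · exfalso
      rcases h' with h' | ⟨_, h''⟩
      · omega
      · exact Sum.Lex.not_inr_lt_inl h''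
    · rw [rotFun_inr, rotFun_succ_inl]
      apply Sum.Lex.inr_lt_inr_iff.2
      apply (Prod.Lex.toLex_lt_toLex).2
      have hmk : m ≤ k := by
        rcases h' with h' | ⟨_, h''⟩
        · omega
        · exact absurd h'' Sum.Lex.not_inr_lt_inl
      rcases Nat.lt_or_ge m k with h2 | h2
      · exact Or.inl h2
      · exact Or.inr ⟨by omega, Sum.Lex.inl_lt_inr _ _⟩
  · rw [rotFun_inr, rotFun_inr]
    apply Sum.Lex.inr_lt_inr_iff.2
    apply (Prod.Lex.toLex_lt_toLex).2
    rcases h' with h' | ⟨h', h''⟩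
    · exact Or.inl h'
    · exact Or.inr ⟨h', Sum.Lex.inl_lt_inl_iff.2 (Sum.Lex.inr_lt_inr_iff.1 h'')⟩

theorem rotFun_surjective : Function.Surjective (rotFun (A := A) (B := B)) := by
  intro z
  rcases hz : ofLex z with a | q
  · exact ⟨toLex (0, toLex (Sum.inl a)), (rotFun_zero_inl a).trans (congrArg toLex hz).symm⟩
  · rcases hq : ofLex (ofLex q).2 with b | a
    · refine ⟨toLex ((ofLex q).1, toLex (Sum.inr b)), ?_⟩
      rw [rotFun_inr, ← hq]
      exact (congrArg toLex hz).symm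
    · refine ⟨toLex ((ofLex q).1 + 1, toLex (Sum.inl a)), ?_⟩
      rw [rotFun_succ_inl, ← hq]
      exact (congrArg toLex hz).symm

/-- `ω ×ₗ (A + B) ≅ A + ω ×ₗ (B + A)`. -/
noncomputable def rotIso : (ℕ ×ₗ (A ⊕ₗ B)) ≃o (A ⊕ₗ (ℕ ×ₗ (B ⊕ₗ A))) :=
  rotFun_strictMono.orderIsoOfSurjective _ rotFun_surjective

end Rot

section Theta
variable {B M : Type} [LinearOrder B] [LinearOrder M] (θ : (B ⊕ₗ M) ≃o M)

/-- the image of the `B`-part -/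
noncomputable def thIota (x : B) : M := θ (toLex (Sum.inl x))

/-- the shift map -/
noncomputable def thTau (m : M) : M := θ (toLex (Sum.inr m))

theorem thTau_strictMono : StrictMono (thTau θ) := fun _ _ h =>
  θ.strictMono (Sum.Lex.inr_lt_inr_iff.2 h)

theorem thIota_strictMono : StrictMono (thIota θ) := fun _ _ h =>
  θ.strictMono (Sum.Lex.inl_lt_inl_iff.2 h)

theorem thIota_lt_thTau (x : B) (m : M) : thIota θ x < thTau θ m :=
  θ.strictMono (Sum.Lex.inl_lt_inr _ _)

theorem thTau_lt_iff {m m' : M} : thTau θ m < thTau θ m' ↔ m < m' := by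
  constructor
  · intro h
    exact Sum.Lex.inr_lt_inr_iff.1 (θ.lt_iff_lt.1 h)
  · exact fun h => thTau_strictMono θ h

/-- the `n`-th block map -/
noncomputable def thG (p : ℕ ×ₗ B) : M := (thTau θ)^[(ofLex p).1] (thIota θ (ofLex p).2)

theorem thG_strictMono : StrictMono (thG θ) := by
  suffices h : ∀ (m n : ℕ) (x y : B),
      (toLex (m, x) : ℕ ×ₗ B) < toLex (n, y) → thG θ (toLex (m, x)) < thG θ (toLex (n, y)) by
    intro p q hpq
    exact h (ofLex p).1 (ofLex q).1 (ofLex p).2 (ofLex q).2 hpq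
  intro m n x y h
  have h' : m < n ∨ m = n ∧ x < y := (Prod.Lex.toLex_lt_toLex (x := (m, x)) (y := (n, y))).1 h
  show (thTau θ)^[m] (thIota θ x) < (thTau θ)^[n] (thIota θ y)
  rcases h' with h' | ⟨rfl, h'⟩
  · have hmono := (thTau_strictMono θ).iterate m
    obtain ⟨k, rfl⟩ : ∃ k, n = m + (k + 1) := ⟨n - m - 1, by omega⟩
    have : (thTau θ)^[m + (k+1)] (thIota θ y) =
        (thTau θ)^[m] (thTau θ ((thTau θ)^[k] (thIota θ y))) := by
      rw [Function.iterate_add_apply, Function.iterate_succ_apply']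
    rw [this]
    exact hmono (thIota_lt_thTau θ x _)
  · exact (thTau_strictMono θ).iterate m (thIota_strictMono θ h')

theorem thG_range_lower : IsLowerSet (Set.range (thG θ)) := by
  have key : ∀ (n : ℕ) (x : B) (z : M), z < (thTau θ)^[n] (thIota θ x) →
      z ∈ Set.range (thG θ) := by
    intro n
    induction n with
    | zero =>
      intro x z hz
      obtain ⟨w, rfl⟩ := θ.surjective z
      rcases hw : ofLex w with x' | m
      · exact ⟨toLex (0, x'), by
          show thIota θ x' = θ w
          rw [thIota, ← hw]; rfl⟩
      · exfalso
        have : θ w = thTau θ m := by rw [thTau, ← hw]; rfl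
        rw [this] at hz
        exact absurd (thIota_lt_thTau θ x m) (lt_asymm hz)
    | succ k ih =>
      intro x z hz
      obtain ⟨w, rfl⟩ := θ.surjective z
      rcases hw : ofLex w with x' | m
      · exact ⟨toLex (0, x'), by
          show thIota θ x' = θ w
          rw [thIota, ← hw]; rfl⟩
      · have hθw : θ w = thTau θ m := by rw [thTau, ← hw]; rfl
        rw [Function.iterate_succ_apply'] at hz
        rw [hθw] at hz ⊢
        have hm : m < (thTau θ)^[k] (thIota θ x) := (thTau_lt_iff θ).1 hz
        obtain ⟨p, hp⟩ := ih x m hm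
        refine ⟨toLex ((ofLex p).1 + 1, (ofLex p).2), ?_⟩
        show (thTau θ)^[(ofLex p).1 + 1] (thIota θ (ofLex p).2) = thTau θ m
        rw [Function.iterate_succ_apply']
        exact congrArg (thTau θ) hp
  rintro a b hba ⟨p, rfl⟩
  rcases eq_or_lt_of_le hba with rfl | hlt
  · exact ⟨p, rfl⟩
  · exact key (ofLex p).1 (ofLex p).2 b hlt

end Theta

section Lower
variable {M : Type} [LinearOrder M]

/-- Splitting a linear order along a lower set. -/
noncomputable def lowerSplitIso {P : Set M} (hP : IsLowerSet P) :
    M ≃o (↥P ⊕ₗ ↥(Pᶜ)) := by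
  classical
  have hsm : StrictMono (fun m : M =>
      if h : m ∈ P then (toLex (Sum.inl ⟨m, h⟩) : ↥P ⊕ₗ ↥(Pᶜ)) else toLex (Sum.inr ⟨m, h⟩)) := by
    intro a b hab
    by_cases ha : a ∈ P <;> by_cases hb : b ∈ P <;> dsimp only
    · rw [dif_pos ha, dif_pos hb]
      exact Sum.Lex.inl_lt_inl_iff.2 (Subtype.mk_lt_mk.2 hab)
    · rw [dif_pos ha, dif_neg hb]
      exact Sum.Lex.inl_lt_inr _ _
    · exact absurd (hP hab.le hb) ha
    · rw [dif_neg ha, dif_neg hb]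
      exact Sum.Lex.inr_lt_inr_iff.2 (Subtype.mk_lt_mk.2 hab)
  refine hsm.orderIsoOfSurjective _ ?_
  intro z
  rcases hz : ofLex z with ⟨a, ha⟩ | ⟨b, hb⟩
  · exact ⟨a, by dsimp only; rw [dif_pos ha]; exact (congrArg toLex hz).symm⟩
  · exact ⟨b, by dsimp only; rw [dif_neg hb]; exact (congrArg toLex hz).symm⟩

theorem lowerSet_total {P Q : Set M} (hP : IsLowerSet P) (hQ : IsLowerSet Q) :
    P ⊆ Q ∨ Q ⊆ P := by
  by_cases h : P ⊆ Q
  · exact Or.inl h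
  · right
    rw [Set.not_subset] at h
    obtain ⟨x, hxP, hxQ⟩ := h
    intro q hq
    rcases le_total q x with hle | hle
    · exact hP hle hxP
    · exact absurd (hQ hle hq) hxQ

end Lower

section Subset
variable {M : Type} [LinearOrder M]

theorem finite_iterDeriv_subset {S T : Set M} (hS : S.OrdConnected) (hST : S ⊆ T)
    {n : ℕ} (h : Finite (IterDeriv ↥T n)) : Finite (IterDeriv ↥S n) := by
  set S' : Set ↥T := {p : ↥T | (p : M) ∈ S} with hS'
  have hconn : S'.OrdConnected := by
    constructor
    rintro x hx y hy z hz
    exact hS.out hx hy ⟨Subtype.coe_le_coe.2 hz.1, Subtype.coe_le_coe.2 hz.2⟩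
  have hfin : Finite (IterDeriv ↥S' n) := finite_iterDeriv_subtype n ↥T S' hconn h
  have hsm : StrictMono (fun p : ↥S' => (⟨(p : ↥T), p.2⟩ : ↥S)) := by
    intro p q hpq
    exact Subtype.mk_lt_mk.2 (Subtype.coe_lt_coe.2 hpq)
  have hsurj : Function.Surjective (fun p : ↥S' => (⟨(p : ↥T), p.2⟩ : ↥S)) := by
    rintro ⟨x, hx⟩
    exact ⟨⟨⟨x, hST hx⟩, hx⟩, rfl⟩
  exact finite_iterDeriv_congr (hsm.orderIsoOfSurjective _ hsurj) hfin

theorem finite_iterDeriv_initSeg (B : Type) [LinearOrder B] (r : ℕ)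
    (hB : Finite (IterDeriv B r)) :
    ∀ n : ℕ, Finite (IterDeriv ↥{p : ℕ ×ₗ B | (ofLex p).1 ≤ n} r) := by
  intro n
  induction n with
  | zero =>
    have hset : {p : ℕ ×ₗ B | (ofLex p).1 ≤ 0} = fiberSet ℕ B 0 := by
      ext p; exact ⟨fun h => Nat.le_zero.1 h, fun h => le_of_eq h⟩
    rw [hset]
    exact finite_iterDeriv_congr (fiberIso ℕ 0) hB
  | succ n ih =>
    set T : Set (ℕ ×ₗ B) := {p | (ofLex p).1 ≤ n + 1} with hT
    set U : Set ↥T := {p | ((p : ℕ ×ₗ B) : ℕ ×ₗ B) ∈ {q : ℕ ×ₗ B | (ofLex q).1 ≤ n}} with hU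
    set V : Set ↥T := {p | (ofLex (p : ℕ ×ₗ B)).1 = n + 1} with hV
    have hTlower : IsLowerSet T := by
      intro p q hqp hp
      rcases (Prod.Lex.toLex_le_toLex (x := (ofLex q)) (y := (ofLex p))).1 hqp with h | h
      · exact le_trans (Nat.le_of_lt h) hp
      · exact le_trans (le_of_eq h.1) hp
    have hUlower : IsLowerSet U := by
      intro p q hqp hp
      rcases (Prod.Lex.toLex_le_toLex (x := (ofLex (q : ℕ ×ₗ B))) (y := (ofLex (p : ℕ ×ₗ B)))).1
        (Subtype.coe_le_coe.2 hqp) with h | h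
      · exact le_trans (Nat.le_of_lt h) hp
      · exact le_trans (le_of_eq h.1) hp
    have hVupper : IsUpperSet V := by
      intro p q hpq hp
      have h1 : (ofLex (q : ℕ ×ₗ B)).1 ≤ n + 1 := q.2
      rcases (Prod.Lex.toLex_le_toLex (x := (ofLex (p : ℕ ×ₗ B))) (y := (ofLex (q : ℕ ×ₗ B)))).1
        (Subtype.coe_le_coe.2 hpq) with h | h
      · exact absurd (hp ▸ h) (by have := q.2; omega)
      · exact h.1.symm.trans hp
    have hcov : U ∪ V = Set.univ := by
      apply Set.eq_univ_of_forall
      intro p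
      rcases Nat.lt_or_ge (ofLex (p : ℕ ×ₗ B)).1 (n + 1) with h | h
      · exact Or.inl (Nat.lt_succ_iff.1 h)
      · exact Or.inr (le_antisymm p.2 h)
    have hUfin : Finite (IterDeriv ↥U r) := by
      have hsm : StrictMono (fun p : ↥U => (⟨(p : ℕ ×ₗ B), p.2⟩ :
          ↥{q : ℕ ×ₗ B | (ofLex q).1 ≤ n})) := fun p q h =>
        Subtype.mk_lt_mk.2 (Subtype.coe_lt_coe.2 (Subtype.coe_lt_coe.2 h))
      have hsurj : Function.Surjective (fun p : ↥U => (⟨(p : ℕ ×ₗ B), p.2⟩ :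
          ↥{q : ℕ ×ₗ B | (ofLex q).1 ≤ n})) := by
        rintro ⟨x, hx⟩
        exact ⟨⟨⟨x, le_trans hx (Nat.le_succ n)⟩, hx⟩, rfl⟩
      exact finite_iterDeriv_congr (hsm.orderIsoOfSurjective _ hsurj).symm ih
    have hVfin : Finite (IterDeriv ↥V r) := by
      have hsm : StrictMono (fun p : ↥V => (⟨(p : ℕ ×ₗ B), p.2⟩ :
          ↥(fiberSet ℕ B (n+1)))) := fun p q h =>
        Subtype.mk_lt_mk.2 (Subtype.coe_lt_coe.2 (Subtype.coe_lt_coe.2 h))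
      have hsurj : Function.Surjective (fun p : ↥V => (⟨(p : ℕ ×ₗ B), p.2⟩ :
          ↥(fiberSet ℕ B (n+1)))) := by
        rintro ⟨x, hx⟩
        exact ⟨⟨⟨x, le_of_eq hx⟩, hx⟩, rfl⟩
      exact finite_iterDeriv_congr (hsm.orderIsoOfSurjective _ hsurj).symm
        (finite_iterDeriv_congr (fiberIso ℕ (n+1)) hB)
    exact finite_iterDeriv_union r ↥T U V hUlower.ordConnected hVupper.ordConnected
      hcov hUfin hVfin

end Subset

noncomputable def emptyRightIso {C : Type} [LinearOrder C] : (C ⊕ₗ Fin 0) ≃o C := by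
  have hsm : StrictMono (fun z : C ⊕ₗ Fin 0 => Sum.elim id (fun e : Fin 0 => e.elim0) (ofLex z)) := by
    intro x y hxy
    rcases hx : ofLex x with c | e
    · rcases hy : ofLex y with c' | e'
      · simp only [hx, hy, Sum.elim_inl, id]
        have := hxy
        rw [show x = toLex (ofLex x) from rfl, show y = toLex (ofLex y) from rfl, hx, hy] at this
        exact Sum.Lex.inl_lt_inl_iff.1 this
      · exact e'.elim0
    · exact e.elim0
  refine hsm.orderIsoOfSurjective _ ?_
  intro c
  exact ⟨toLex (Sum.inl c), rfl⟩


/-- Euclidean division lemma, unequal-rank case: if `L₁, L₂` are finitely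
presented with `ω ×ₗ (L₁ + L₂) ≅ ω ×ₗ (L₂ + L₁)` and the Hausdorff rank of `L₂`
is strictly smaller than that of `L₁`, then `ω ×ₗ L₂` is isomorphic to a prefix
of `L₁`. -/
theorem stmt_18 (L₁ L₂ : Type) [LinearOrder L₁] [LinearOrder L₂]
    (h₁ : IsFP L₁) (h₂ : IsFP L₂)
    (hiso : Nonempty ((ℕ ×ₗ (L₁ ⊕ₗ L₂)) ≃o (ℕ ×ₗ (L₂ ⊕ₗ L₁))))
    (hrk : hrank L₂ < hrank L₁) :
    ∃ (Q : Type) (_ : LinearOrder Q), Nonempty (((ℕ ×ₗ L₂) ⊕ₗ Q) ≃o L₁) := by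
  classical
  obtain ⟨e⟩ := hiso
  -- θ : L₂ ⊕ₗ M ≃o M where M = ℕ ×ₗ (L₁ ⊕ₗ L₂)
  let θ : (L₂ ⊕ₗ (ℕ ×ₗ (L₁ ⊕ₗ L₂))) ≃o ℕ ×ₗ (L₁ ⊕ₗ L₂) :=
    (rotIso (A := L₂) (B := L₁)).symm.trans e.symm
  set P : Set (ℕ ×ₗ (L₁ ⊕ₗ L₂)) := Set.range (thG θ) with hPdef
  have hPlower : IsLowerSet P := thG_range_lower θ
  have hGsm := thG_strictMono θ
  have hg'sm : StrictMono (fun p : ℕ ×ₗ L₂ => (⟨thG θ p, ⟨p, rfl⟩⟩ : ↥P)) :=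
    fun p q h => Subtype.mk_lt_mk.2 (hGsm h)
  have hg'surj : Function.Surjective (fun p : ℕ ×ₗ L₂ => (⟨thG θ p, ⟨p, rfl⟩⟩ : ↥P)) := by
    rintro ⟨_, p, rfl⟩
    exact ⟨p, rfl⟩
  let gIso : (ℕ ×ₗ L₂) ≃o ↥P := hg'sm.orderIsoOfSurjective _ hg'surj
  set A : Set (ℕ ×ₗ (L₁ ⊕ₗ L₂)) :=
    Set.range (fun a : L₁ => toLex ((0:ℕ), toLex (Sum.inl a))) with hAdef
  have hAlower : IsLowerSet A := by
    rintro _ z hz ⟨a, rfl⟩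
    rcases (Prod.Lex.toLex_le_toLex (x := (ofLex z)) (y := ((0:ℕ), toLex (Sum.inl a)))).1 hz with h | ⟨h1, h2⟩
    · omega
    · rcases h2' : ofLex (ofLex z).2 with a' | b
      · refine ⟨a', ?_⟩
        have hz2 : (ofLex z).2 = toLex (Sum.inl a') := congrArg toLex h2'
        exact (congrArg toLex (Prod.ext h1.symm hz2.symm) :
          (toLex ((0:ℕ), toLex (Sum.inl a')) : ℕ ×ₗ (L₁ ⊕ₗ L₂)) = toLex (ofLex z))
      · exfalso
        have : (ofLex z).2 = toLex (Sum.inr b) := congrArg toLex h2'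
        rw [this] at h2
        exact Sum.Lex.not_inr_le_inl h2
  have haIsm : StrictMono (fun a : L₁ => (⟨toLex ((0:ℕ), toLex (Sum.inl a)), a, rfl⟩ : ↥A)) := by
    intro a b hab
    apply Subtype.mk_lt_mk.2
    exact (Prod.Lex.toLex_lt_toLex).2 (Or.inr ⟨rfl, Sum.Lex.inl_lt_inl_iff.2 hab⟩)
  have haIsurj : Function.Surjective
      (fun a : L₁ => (⟨toLex ((0:ℕ), toLex (Sum.inl a)), a, rfl⟩ : ↥A)) := by
    rintro ⟨_, a, rfl⟩
    exact ⟨a, rfl⟩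
  let aIso : L₁ ≃o ↥A := haIsm.orderIsoOfSurjective _ haIsurj
  rcases lowerSet_total hPlower hAlower with hPA | hAP
  · -- P ⊆ A : ω ×ₗ L₂ is a prefix of L₁
    set P₁ : Set L₁ := {a : L₁ | toLex ((0:ℕ), toLex (Sum.inl a)) ∈ P} with hP₁def
    have hP₁lower : IsLowerSet P₁ := by
      intro a a' ha'a ha
      refine hPlower ?_ ha
      exact (Prod.Lex.toLex_le_toLex).2 (Or.inr ⟨rfl, Sum.Lex.inl_le_inl_iff.2 ha'a⟩)
    have hi1sm : StrictMono (fun a : ↥P₁ =>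
        (⟨toLex ((0:ℕ), toLex (Sum.inl (a : L₁))), a.2⟩ : ↥P)) := by
      intro a b hab
      apply Subtype.mk_lt_mk.2
      exact (Prod.Lex.toLex_lt_toLex).2 (Or.inr ⟨rfl, Sum.Lex.inl_lt_inl_iff.2 hab⟩)
    have hi1surj : Function.Surjective (fun a : ↥P₁ =>
        (⟨toLex ((0:ℕ), toLex (Sum.inl (a : L₁))), a.2⟩ : ↥P)) := by
      rintro ⟨p, hp⟩
      obtain ⟨a, ha⟩ := hPA hp
      have ha' : toLex ((0:ℕ), toLex (Sum.inl a)) = p := ha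
      refine ⟨⟨a, ?_⟩, ?_⟩
      · show toLex ((0:ℕ), toLex (Sum.inl a)) ∈ P
        exact ha'.symm ▸ hp
      · exact Subtype.ext ha'
    let iso1 : ↥P₁ ≃o ↥P := hi1sm.orderIsoOfSurjective _ hi1surj
    refine ⟨↥(P₁ᶜ), inferInstance, ⟨?_⟩⟩
    exact (sumLexIso (gIso.trans iso1.symm) (OrderIso.refl ↥(P₁ᶜ))).trans
      (lowerSplitIso hP₁lower).symm
  · -- A ⊆ P
    set S : Set (ℕ ×ₗ L₂) := {q : ℕ ×ₗ L₂ | thG θ q ∈ A} with hSdef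
    have hSlower : IsLowerSet S := fun q q' hq'q hq => hAlower (hGsm.monotone hq'q) hq
    have hssm : StrictMono (fun q : ↥S => (⟨thG θ (q : ℕ ×ₗ L₂), q.2⟩ : ↥A)) :=
      fun q q' h => Subtype.mk_lt_mk.2 (hGsm h)
    have hssurj : Function.Surjective (fun q : ↥S => (⟨thG θ (q : ℕ ×ₗ L₂), q.2⟩ : ↥A)) := by
      rintro ⟨p, hp⟩
      obtain ⟨q, hq⟩ := hAP hp
      refine ⟨⟨q, ?_⟩, ?_⟩
      · show thG θ q ∈ A
        exact hq.symm ▸ hp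
      · exact Subtype.ext hq
    let sIso : ↥S ≃o ↥A := hssm.orderIsoOfSurjective _ hssurj
    let LIso : L₁ ≃o ↥S := aIso.trans sIso.symm
    by_cases huniv : S = Set.univ
    · refine ⟨Fin 0, inferInstance, ⟨?_⟩⟩
      have hu : ↥S ≃o (ℕ ×ₗ L₂) := by
        rw [huniv]
        exact OrderIso.Set.univ
      exact emptyRightIso.trans (hu.symm.trans LIso.symm)
    · exfalso
      obtain ⟨q₀, hq₀⟩ : ∃ q₀, q₀ ∉ S := by
        by_contra hc
        push_neg at hc
        exact huniv (Set.eq_univ_of_forall hc)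
      have hSsub : S ⊆ {p : ℕ ×ₗ L₂ | (ofLex p).1 ≤ (ofLex q₀).1} := by
        intro s hs
        have hlt : s < q₀ := lt_of_not_ge (fun h => hq₀ (hSlower h hs))
        rcases (Prod.Lex.toLex_lt_toLex (x := (ofLex s)) (y := (ofLex q₀))).1 hlt with h | h
        · exact le_of_lt h
        · exact le_of_eq h.1
      have hL₂fin : Finite (IterDeriv L₂ (hrank L₂)) :=
        finite_iterDeriv_hrank (isFP_finite_rank h₂)
      have hTfin := finite_iterDeriv_initSeg L₂ (hrank L₂) hL₂fin (ofLex q₀).1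
      have hSfin : Finite (IterDeriv ↥S (hrank L₂)) :=
        finite_iterDeriv_subset hSlower.ordConnected hSsub hTfin
      have hL₁fin : Finite (IterDeriv L₁ (hrank L₂)) :=
        finite_iterDeriv_congr LIso.symm hSfin
      exact absurd (hrank_le hL₁fin) (not_le.2 hrk)
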